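/- Let M_σ : ℤ^9 → ℤ^9 be as above and let v = (1, 0, 0, 0, 0, -1, -1, -1, -1) (the class H - E₅ - E₆ - E₇ - E₈). Then the vectors M_σⁿ(v), n ∈ ℕ, are pairwise distinct; in particular for all m ≠ n, M_σᵐ(v) ≠ M_σⁿ(v). -/
import Mathlib


open Matrix

/-- The Cremona action on `(d, m₁, …, m₈)` centered at the first four points,
as a 9×9 integer matrix in the basis `(H, E₁, …, E₈)`. -/
def Cremona : Matrix (Fin 9) (Fin 9) ℤ :=
  !![3,-1,-1,-1,-1,0,0,0,0;
     2, 0,-1,-1,-1,0,0,0,0;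
     2,-1, 0,-1,-1,0,0,0,0;
     2,-1,-1, 0,-1,0,0,0,0;
     2,-1,-1,-1, 0,0,0,0,0;
     0, 0, 0, 0, 0,1,0,0,0;
     0, 0, 0, 0, 0,0,1,0,0;
     0, 0, 0, 0, 0,0,0,1,0;
     0, 0, 0, 0, 0,0,0,0,1]

/-- The permutation `(d, m₁, …, m₈) ↦ (d, m₂, …, m₈, m₁)`. -/
def CyclicShift : Matrix (Fin 9) (Fin 9) ℤ :=
  !![1,0,0,0,0,0,0,0,0;
     0,0,1,0,0,0,0,0,0;
     0,0,0,1,0,0,0,0,0;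
     0,0,0,0,1,0,0,0,0;
     0,0,0,0,0,1,0,0,0;
     0,0,0,0,0,0,1,0,0;
     0,0,0,0,0,0,0,1,0;
     0,0,0,0,0,0,0,0,1;
     0,1,0,0,0,0,0,0,0]

/-- The Coxeter element `M_σ = P ∘ M`. -/
def Msigma : Matrix (Fin 9) (Fin 9) ℤ := CyclicShift * Cremona

/-- The class `H - E₅ - E₆ - E₇ - E₈`. -/
def rootClass : Fin 9 → ℤ := ![1, 0, 0, 0, 0, -1, -1, -1, -1]

/-- The anticanonical-type left eigenvector. -/
def Kvec : Fin 9 → ℤ := ![-4, 1, 1, 1, 1, 1, 1, 1, 1]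

/-- The degree-increment functional. -/
def bvec : Fin 9 → ℤ := ![2, -1, -1, -1, -1, 0, 0, 0, 0]

/-- The orbit. -/
def worb (n : ℕ) : Fin 9 → ℤ := (Msigma ^ n).mulVec rootClass

lemma KM : Matrix.vecMul Kvec Msigma = Kvec := by decide

lemma bM6 : Matrix.vecMul bvec (Msigma ^ 6) = bvec - Kvec := by decide

lemma worb_succ (n : ℕ) : worb (n + 1) = Msigma.mulVec (worb n) := by
  simp [worb, pow_succ', Matrix.mulVec_mulVec]

lemma worb_add6 (n : ℕ) : worb (n + 6) = (Msigma ^ 6).mulVec (worb n) := by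
  rw [worb, show n + 6 = 6 + n by omega, pow_add, ← Matrix.mulVec_mulVec]; rfl

lemma K_worb (n : ℕ) : Kvec ⬝ᵥ worb n = -8 := by
  induction n with
  | zero => decide
  | succ n ih =>
      rw [worb_succ, Matrix.dotProduct_mulVec, KM, ih]

lemma b_worb (n : ℕ) : 1 ≤ bvec ⬝ᵥ worb n := by
  induction n using Nat.strong_induction_on with
  | _ n ih =>
    match n, ih with
    | 0, _ => decide
    | 1, _ => decide
    | 2, _ => decide
    | 3, _ => decide
    | 4, _ => decide
    | 5, _ => decide
    | (m + 6), ih =>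
        have h1 : 1 ≤ bvec ⬝ᵥ worb m := ih m (by omega)
        have h2 := K_worb m
        rw [worb_add6, Matrix.dotProduct_mulVec, bM6, sub_dotProduct]
        omega

lemma row0 (x : Fin 9 → ℤ) :
    Msigma.mulVec x 0 = x 0 + bvec ⬝ᵥ x := by
  simp [Msigma, Cremona, CyclicShift, bvec, Matrix.mulVec, Matrix.mul_apply,
    dotProduct, Fin.sum_univ_succ]
  ring

lemma deg_mono : StrictMono (fun n => worb n 0) := by
  apply strictMono_nat_of_lt_succ
  intro n
  have h1 := b_worb n
  have h2 : worb (n + 1) 0 = worb n 0 + bvec ⬝ᵥ worb n := by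
    rw [worb_succ]; exact row0 (worb n)
  omega

/-- the vectors `M_σⁿ(v)`, `n ∈ ℕ`, are pairwise distinct, where
`v = H - E₅ - E₆ - E₇ - E₈`. -/
theorem msigma_orbit_pairwise_distinct :
    ∀ m n : ℕ, m ≠ n → (Msigma ^ m).mulVec rootClass ≠ (Msigma ^ n).mulVec rootClass := by
  intro m n hmn h
  exact hmn (deg_mono.injective (congrFun h 0))
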